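/- Let n ≥ 1, c ∈ (0,1), ℓ ≥ 1, and λ ≥ 1. Suppose x, x' ∈ {0,1}^n, and there is a position j with x'_j = z_j and x_j ≠ z_j, and x' differs from x in exactly ℓ positions. Let y be obtained from x by independently, for each position i, taking yᵢ = x'ᵢ with probability c and yᵢ = xᵢ otherwise; repeat independently λ times and take the best. Then the probability that some trial yields OM_z(y) > OM_z(x) is at least 1 - (1 - c(1-c)^{ℓ-1})^λ. -/

import Mathlib

open Finset MeasureTheory

/-- The generalized OneMax function with target string `z`. -/
def oneMax {n : ℕ} (z x : Fin n → Bool) : ℕ :=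
  #{i : Fin n | x i = z i}

/-- Biased crossover: with coin vector `b`, take `x'ᵢ` where `bᵢ = true` and `xᵢ`
otherwise. -/
def cross {n : ℕ} (x x' : Fin n → Bool) (b : Fin n → Bool) : Fin n → Bool :=
  fun i => if b i then x' i else x i

/-- Success probability of the crossover phase (Lemma 6 of [DoerrDE15]): if `x'`
differs from `x` in exactly `ℓ` positions and at one of them agrees with `z` while
`x` does not, then `λ` independent crossovers `cross_c(x,x')` (each position taken
from `x'` independently with probability `c`) produce an offspring strictly better
than `x` with probability at least `1 - (1 - c(1-c)^{ℓ-1})^λ`. -/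
theorem stmt_14 {n : ℕ} (hn : 1 ≤ n) (z x x' : Fin n → Bool) (c : ℝ)
    (hc0 : 0 < c) (hc1 : c < 1) (ℓ lam : ℕ) (hℓ : 1 ≤ ℓ) (hlam : 1 ≤ lam)
    (hdiff : hammingDist x x' = ℓ)
    (hgood : ∃ j, x' j = z j ∧ x j ≠ z j) :
    ENNReal.ofReal (1 - (1 - c * (1 - c) ^ (ℓ - 1)) ^ lam) ≤
      (Measure.pi fun _ : Fin lam =>
          Measure.pi fun _ : Fin n =>
            (PMF.bernoulli (Real.toNNReal c)
              (Real.toNNReal_le_one.mpr hc1.le)).toMeasure)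
        {ω | ∃ k : Fin lam, oneMax z x < oneMax z (cross x x' (ω k))} := by
  obtain ⟨j, hj1, hj2⟩ := hgood
  set μb := (PMF.bernoulli (Real.toNNReal c) (Real.toNNReal_le_one.mpr hc1.le)).toMeasure
    with hμb
  set μ := Measure.pi fun _ : Fin n => μb with hμ
  set A : Set (Fin n → Bool) := {b | oneMax z x < oneMax z (cross x x' b)} with hA
  set p : ℝ := c * (1 - c) ^ (ℓ - 1) with hp
  have hc1' : (0:ℝ) ≤ 1 - c := by linarith
  have hp0 : 0 ≤ p := by positivity
  have hp1 : p ≤ 1 := by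
    apply mul_le_one₀ hc1.le (by positivity)
    exact pow_le_one₀ hc1' (by linarith)
  have htrue : μb {true} = ENNReal.ofReal c := by
    rw [hμb, PMF.toMeasure_apply_singleton _ _ (measurableSet_singleton _),
      PMF.bernoulli_apply, Bool.cond_true]
    rfl
  have hfalse : μb {false} = ENNReal.ofReal (1 - c) := by
    rw [hμb, PMF.toMeasure_apply_singleton _ _ (measurableSet_singleton _),
      PMF.bernoulli_apply, Bool.cond_false, ENNReal.ofReal_sub _ hc0.le, ENNReal.ofReal_one]
    rw [ENNReal.coe_sub, ENNReal.coe_one]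
    rfl
  -- the differing positions
  set D : Finset (Fin n) := univ.filter (fun i => x i ≠ x' i) with hD
  have hjD : j ∈ D := by
    simp only [hD, mem_filter, mem_univ, true_and]
    intro h; exact hj2 (h ▸ hj1)
  have hDcard : D.card = ℓ := by
    rw [← hdiff]; rfl
  -- the cylinder set
  set S : Fin n → Set Bool := fun i =>
    if i = j then {true} else if x i = x' i then Set.univ else {false} with hS
  -- cylinder measure
  have hCmeas : μ (Set.univ.pi S) = ENNReal.ofReal p := by
    rw [hμ, Measure.pi_pi]
    have h1 : ∀ i ∈ D.erase j, μb (S i) = ENNReal.ofReal (1 - c) := by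
      intro i hi
      obtain ⟨hij, hiD⟩ := mem_erase.mp hi
      simp only [hD, mem_filter] at hiD
      simp only [hS, if_neg hij, if_neg hiD.2, hfalse]
    have h2 : ∀ i ∈ Dᶜ, μb (S i) = 1 := by
      intro i hi
      simp only [hD, mem_compl, mem_filter, mem_univ, true_and, not_not] at hi
      have hij : i ≠ j := by
        rintro rfl; exact hj2 (hi ▸ hj1)
      simp only [hS, if_neg hij, if_pos hi]
      exact measure_univ
    rw [← Finset.prod_compl_mul_prod D, Finset.prod_congr rfl h2, Finset.prod_const_one,
      one_mul, ← Finset.mul_prod_erase D _ hjD, Finset.prod_congr rfl h1,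
      Finset.prod_const]
    have hjS : S j = {true} := by simp [hS]
    rw [hjS, htrue, Finset.card_erase_of_mem hjD, hDcard,
      ← ENNReal.ofReal_pow hc1', ← ENNReal.ofReal_mul hc0.le]
  -- cylinder is a success
  have hsub : Set.univ.pi S ⊆ A := by
    intro b hb
    have hbj : b j = true := by
      have := hb j (Set.mem_univ j)
      simpa [hS] using this
    have hbi : ∀ i, i ≠ j → x i ≠ x' i → b i = false := by
      intro i hij hxi
      have := hb i (Set.mem_univ i)
      simpa [hS, hij, hxi] using this
    have hagree : ∀ i, x i = z i → cross x x' b i = z i := by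
      intro i hi
      by_cases hij : i = j
      · exact absurd (hij ▸ hi) hj2
      by_cases hxi : x i = x' i
      · simp only [cross]; split <;> [exact hxi ▸ hi; exact hi]
      · simp only [cross, hbi i hij hxi]; exact hi
    have hjc : cross x x' b j = z j := by simp [cross, hbj, hj1]
    simp only [hA, Set.mem_setOf_eq, oneMax]
    apply Finset.card_lt_card
    constructor
    · intro i hi
      simp only [mem_filter, mem_univ, true_and] at hi ⊢
      exact hagree i hi
    · intro hcon
      have := hcon (by simp [hjc] : j ∈ ({i : Fin n | cross x x' b i = z i} : Finset _))
      simp only [mem_filter, mem_univ, true_and] at this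
      exact hj2 this
  have hμprob : IsProbabilityMeasure μ := by infer_instance
  have hAbound : ENNReal.ofReal p ≤ μ A := hCmeas ▸ measure_mono hsub
  have hAc : μ Aᶜ ≤ ENNReal.ofReal (1 - p) := by
    rw [prob_compl_eq_one_sub (A.to_countable.measurableSet)]
    calc 1 - μ A ≤ 1 - ENNReal.ofReal p := tsub_le_tsub_left hAbound 1
    _ = ENNReal.ofReal (1 - p) := by
        rw [ENNReal.ofReal_sub _ hp0, ENNReal.ofReal_one]
  set E : Set (Fin lam → Fin n → Bool) :=
    {ω | ∃ k : Fin lam, oneMax z x < oneMax z (cross x x' (ω k))} with hE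
  set ν := Measure.pi fun _ : Fin lam => μ with hν
  have hEc : Eᶜ = Set.univ.pi fun _ : Fin lam => Aᶜ := by
    ext ω
    simp [hE, hA, Set.mem_pi]
  have hνEc : ν Eᶜ = (μ Aᶜ) ^ lam := by
    rw [hEc, hν, Measure.pi_pi, Finset.prod_const, Finset.card_univ, Fintype.card_fin]
  have hνprob : IsProbabilityMeasure ν := by infer_instance
  have hunion : (1:ENNReal) ≤ ν E + ν Eᶜ := by
    have : ν (E ∪ Eᶜ) ≤ ν E + ν Eᶜ := measure_union_le E Eᶜ
    rwa [Set.union_compl_self, measure_univ] at this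
  have key : ν Eᶜ ≤ ENNReal.ofReal ((1 - p) ^ lam) := by
    rw [hνEc]
    calc μ Aᶜ ^ lam ≤ ENNReal.ofReal (1 - p) ^ lam := pow_le_pow_left' hAc lam
    _ = ENNReal.ofReal ((1 - p) ^ lam) := (ENNReal.ofReal_pow (by linarith) lam).symm
  calc ENNReal.ofReal (1 - (1 - p) ^ lam)
      = 1 - ENNReal.ofReal ((1 - p) ^ lam) := by
        rw [ENNReal.ofReal_sub _ (pow_nonneg (by linarith) lam), ENNReal.ofReal_one]
    _ ≤ 1 - ν Eᶜ := tsub_le_tsub_left key 1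
    _ ≤ ν E := tsub_le_iff_right.mpr hunion
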